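/- Let n ≥ 1 and let P ⊆ ℝ^n be a full-dimensional lattice polytope. Suppose k is an integer with 0 ≤ k ≤ n − 1 such that the dilate kP contains no lattice point in its interior. Then for every integer ℓ ≥ n − k and every integer j ≥ 0, one has (ℓP ∩ ℤ^n) + (jP ∩ ℤ^n) = ((ℓ + j)P ∩ ℤ^n); that is, every lattice point of (ℓ+j)P is the sum of a lattice point of ℓP and a lattice point of jP. (The combinatorial translation of the surjectivity H⁰(X, A^{m+1}) ⊗ H⁰(X, A^{j}) → H⁰(X, A^{m+1+j}) obtained from Mumford's theorem applied to the (n−1−d(P))-autoregular ample line bundle A, as in the Remark following the proof of Theorem 1.2.) -/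

import Mathlib

open Pointwise

/-- The set of lattice points of `ℝ^n`, i.e. points with all coordinates integral. -/
def latticePts (n : ℕ) : Set (Fin n → ℝ) := {x | ∀ i, ∃ z : ℤ, x i = (z : ℝ)}

lemma lat_add {n : ℕ} {x y : Fin n → ℝ} (hx : x ∈ latticePts n) (hy : y ∈ latticePts n) :
    x + y ∈ latticePts n := by
  intro i
  obtain ⟨a, ha⟩ := hx i
  obtain ⟨b, hb⟩ := hy i
  exact ⟨a + b, by simp [ha, hb]⟩

lemma lat_sub {n : ℕ} {x y : Fin n → ℝ} (hx : x ∈ latticePts n) (hy : y ∈ latticePts n) :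
    x - y ∈ latticePts n := by
  intro i
  obtain ⟨a, ha⟩ := hx i
  obtain ⟨b, hb⟩ := hy i
  exact ⟨a - b, by simp [ha, hb]⟩

lemma lat_zero {n : ℕ} : (0 : Fin n → ℝ) ∈ latticePts n := fun i => ⟨0, by simp⟩

lemma lat_sum {n : ℕ} {ι : Type*} (s : Finset ι) (f : ι → Fin n → ℝ)
    (h : ∀ i ∈ s, f i ∈ latticePts n) : (∑ i ∈ s, f i) ∈ latticePts n := by
  classical
  induction s using Finset.induction_on with
  | empty => simpa using lat_zero
  | insert _ _ hni ih =>
    rw [Finset.sum_insert hni]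
    exact lat_add (h _ (Finset.mem_insert_self _ _))
      (ih fun i hi => h i (Finset.mem_insert_of_mem hi))

lemma lat_nsmul {n : ℕ} {x : Fin n → ℝ} (hx : x ∈ latticePts n) (p : ℕ) :
    (p : ℝ) • x ∈ latticePts n := by
  intro i
  obtain ⟨a, ha⟩ := hx i
  exact ⟨p * a, by push_cast; simp [ha]⟩

lemma add_dilates {n : ℕ} {P : Set (Fin n → ℝ)} (hconv : Convex ℝ P) (p q : ℕ)
    {a b : Fin n → ℝ} (ha : a ∈ (p : ℝ) • P) (hb : b ∈ (q : ℝ) • P) :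
    a + b ∈ ((p + q : ℕ) : ℝ) • P := by
  push_cast
  rw [hconv.add_smul (by positivity) (by positivity)]
  exact Set.add_mem_add ha hb

lemma exists_extend_span {n : ℕ} (S : Finset (Fin n → ℝ))
    (hspan : affineSpan ℝ (S : Set (Fin n → ℝ)) = ⊤) :
    ∀ (q : ℕ) (A : Set (Fin n → ℝ)), A.Nonempty →
      n ≤ Module.finrank ℝ (vectorSpan ℝ A) + q →
      ∃ V : Finset (Fin n → ℝ), (V : Set (Fin n → ℝ)) ⊆ (S : Set (Fin n → ℝ)) ∧
        V.card ≤ q ∧ affineSpan ℝ (A ∪ (V : Set (Fin n → ℝ))) = ⊤ := by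
  intro q
  induction q with
  | zero =>
    intro A hA hrank
    refine ⟨∅, by simp, le_rfl, ?_⟩
    have hd : vectorSpan ℝ A = ⊤ := by
      apply Submodule.eq_top_of_finrank_eq
      have h1 : Module.finrank ℝ (vectorSpan ℝ A) ≤ Module.finrank ℝ (Fin n → ℝ) :=
        Submodule.finrank_le _
      have h2 : Module.finrank ℝ (Fin n → ℝ) = n := Module.finrank_fin_fun ℝ
      omega
    rw [Finset.coe_empty, Set.union_empty]
    exact (AffineSubspace.affineSpan_eq_top_iff_vectorSpan_eq_top_of_nonempty ℝ (Fin n → ℝ) (Fin n → ℝ) hA).mpr hd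
  | succ q ih =>
    intro A hA hrank
    by_cases htop : affineSpan ℝ A = ⊤
    · refine ⟨∅, by simp, by simp, ?_⟩
      rwa [Finset.coe_empty, Set.union_empty]
    · have hex : ∃ s ∈ S, s ∉ affineSpan ℝ A := by
        by_contra h
        push_neg at h
        exact htop (top_le_iff.mp (hspan ▸ affineSpan_le.mpr h))
      obtain ⟨s, hsS, hs⟩ := hex
      have hlt : affineSpan ℝ A < affineSpan ℝ (insert s A) := by
        refine lt_of_le_of_ne (affineSpan_mono ℝ (Set.subset_insert _ _)) ?_
        intro h
        exact hs (h ▸ subset_affineSpan ℝ _ (Set.mem_insert _ _))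
      have hdirlt : (affineSpan ℝ A).direction < (affineSpan ℝ (insert s A)).direction :=
        AffineSubspace.direction_lt_of_nonempty hlt ((affineSpan_nonempty ℝ).mpr hA)
      have hrk : Module.finrank ℝ (vectorSpan ℝ A) <
          Module.finrank ℝ (vectorSpan ℝ (insert s A)) := by
        rw [← direction_affineSpan, ← direction_affineSpan]
        exact Submodule.finrank_lt_finrank_of_lt hdirlt
      obtain ⟨V, hVS, hVcard, hVspan⟩ := ih (insert s A) ⟨s, Set.mem_insert _ _⟩ (by omega)
      refine ⟨insert s V, ?_, ?_, ?_⟩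
      · rw [Finset.coe_insert]
        exact Set.insert_subset hsS hVS
      · calc (insert s V).card ≤ V.card + 1 := Finset.card_insert_le _ _
          _ ≤ q + 1 := by omega
      · rw [Finset.coe_insert, Set.union_insert, ← Set.insert_union]
        exact hVspan

lemma pos_combo_mem_interior {n : ℕ} {ι : Type*} [Fintype ι] (z : ι → Fin n → ℝ) (w : ι → ℝ)
    (hw : ∀ i, 0 < w i) (hw1 : ∑ i, w i = 1)
    (hspan : affineSpan ℝ (Set.range z) = ⊤) :
    ∑ i, w i • z i ∈ interior (convexHull ℝ (Set.range z)) := by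
  classical
  rcases isEmpty_or_nonempty ι with hι | hι
  · simp at hw1
  -- an affine basis inside the range
  obtain ⟨t, hts, htspan, htind⟩ := exists_affineIndependent ℝ (Fin n → ℝ) (Set.range z)
  have htop : affineSpan ℝ t = ⊤ := htspan.trans hspan
  have htfin : t.Finite := (Set.finite_range z).subset hts
  haveI : Fintype ↥t := htfin.fintype
  have hne_t : t.Nonempty := by
    rcases Set.eq_empty_or_nonempty t with h | h
    · rw [h] at htop; simp at htop
    · exact h
  haveI : Nonempty ↥t := hne_t.to_subtype
  set N : ℕ := Fintype.card ↥t with hN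
  have hNpos : 0 < N := Fintype.card_pos
  have hpick : ∀ τ : ↥t, ∃ i, z i = (τ : Fin n → ℝ) := fun τ => hts τ.2
  choose g hg using hpick
  have hginj : Function.Injective g := by
    intro τ₁ τ₂ h
    apply Subtype.ext
    rw [← hg τ₁, ← hg τ₂, h]
  set I : Finset ι := Finset.univ.image g with hI
  have hIcard : I.card = N := by
    rw [hI, Finset.card_image_of_injective _ hginj, Finset.card_univ]
  set u : ι → ℝ := fun i => if i ∈ I then (N : ℝ)⁻¹ else 0 with hu
  have hupos : ∀ i, 0 ≤ u i := by
    intro i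
    simp only [hu]
    split <;> positivity
  have hule : ∀ i, u i ≤ 1 := by
    intro i
    simp only [hu]
    split
    · apply inv_le_one_of_one_le₀
      exact_mod_cast hNpos
    · norm_num
  have hsumu : ∑ i, u i = 1 := by
    simp only [hu]
    rw [Finset.sum_ite_mem, Finset.univ_inter, Finset.sum_const, hIcard, nsmul_eq_mul]
    field_simp
  have husum : ∀ f : ι → (Fin n → ℝ),
      ∑ i, u i • f i = ∑ τ : ↥t, (N : ℝ)⁻¹ • f (g τ) := by
    intro f
    have : ∀ i, u i • f i = if i ∈ I then (N : ℝ)⁻¹ • f i else 0 := by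
      intro i
      simp only [hu]
      split <;> simp
    simp only [this]
    rw [Finset.sum_ite_mem, Finset.univ_inter, hI, Finset.sum_image
      (fun x _ y _ h => hginj h)]
  set e : Fin n → ℝ := ∑ i, u i • z i with he
  have hecent : e = Finset.univ.centroid ℝ (fun τ : ↥t => (τ : Fin n → ℝ)) := by
    rw [Finset.centroid_def, Finset.affineCombination_eq_linear_combination _ _ _
      (Finset.sum_centroidWeights_eq_one_of_nonempty ℝ _ Finset.univ_nonempty)]
    rw [he, husum]
    apply Finset.sum_congr rfl
    intro τ _
    rw [hg]
    simp [Finset.centroidWeights, hN]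
  have hemem : e ∈ interior (convexHull ℝ (Set.range z)) := by
    have hb : AffineIndependent ℝ ((↑) : ↥t → (Fin n → ℝ)) := htind
    let b : AffineBasis ↥t ℝ (Fin n → ℝ) := ⟨((↑) : ↥t → (Fin n → ℝ)), hb, by
      rwa [Subtype.range_coe]⟩
    have h1 := b.centroid_mem_interior_convexHull
    have hbcoe : ⇑b = ((↑) : ↥t → (Fin n → ℝ)) := rfl
    rw [hbcoe, Subtype.range_coe] at h1
    have h2 : interior (convexHull ℝ t) ⊆ interior (convexHull ℝ (Set.range z)) :=
      interior_mono (convexHull_mono hts)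
    apply h2
    rw [hecent]
    exact h1
  -- the shrinking parameter
  have hwle : ∀ i, w i ≤ 1 := by
    intro i
    rw [← hw1]
    exact Finset.single_le_sum (fun i _ => (hw i).le) (Finset.mem_univ i)
  set δ : ℝ := (Finset.univ.inf' Finset.univ_nonempty w) / 2 with hδ
  have hinfpos : 0 < Finset.univ.inf' Finset.univ_nonempty w := by
    rw [Finset.lt_inf'_iff]
    exact fun i _ => hw i
  have hinfle : ∀ i, Finset.univ.inf' Finset.univ_nonempty w ≤ w i :=
    fun i => Finset.inf'_le _ (Finset.mem_univ i)
  have hδpos : 0 < δ := by positivity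
  have hδlt1 : δ < 1 := by
    obtain ⟨i⟩ := hι
    have := hinfle i
    have := hwle i
    rw [hδ]
    linarith
  have hδle : ∀ i, δ * u i ≤ w i := by
    intro i
    have h1 : δ * u i ≤ δ * 1 := by
      apply mul_le_mul_of_nonneg_left (hule i) hδpos.le
    have := hinfle i
    nlinarith
  set y : Fin n → ℝ := ∑ i, ((w i - δ * u i) / (1 - δ)) • z i with hy
  have hymem : y ∈ convexHull ℝ (Set.range z) := by
    have h₀ : ∀ i ∈ Finset.univ, 0 ≤ (w i - δ * u i) / (1 - δ) := by
      intro i _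
      apply div_nonneg _ (by linarith)
      linarith [hδle i]
    have h₁ : ∑ i, (w i - δ * u i) / (1 - δ) = 1 := by
      rw [← Finset.sum_div, Finset.sum_sub_distrib, ← Finset.mul_sum, hsumu, hw1]
      rw [mul_one, div_self (by linarith : (1:ℝ) - δ ≠ 0)]
    have := affineCombination_mem_convexHull (s := Finset.univ) (v := z) h₀ h₁
    rwa [Finset.affineCombination_eq_linear_combination _ _ _ h₁] at this
  have hco : ∑ i, w i • z i = δ • e + (1 - δ) • y := by
    rw [he, hy]
    simp only [Finset.smul_sum, smul_smul]
    rw [← Finset.sum_add_distrib]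
    apply Finset.sum_congr rfl
    intro i _
    rw [← add_smul]
    congr 1
    have h1δ : (1:ℝ) - δ ≠ 0 := by linarith
    field_simp
    ring
  rw [hco]
  exact (convex_convexHull ℝ _).combo_interior_self_mem_interior hemem hymem hδpos
    (by linarith) (by ring)

lemma sum_mem_smul_convexHull {n : ℕ} {ι : Type*} [Fintype ι] {S : Set (Fin n → ℝ)}
    {z : ι → Fin n → ℝ} (hz : ∀ i, z i ∈ S) {c : ι → ℝ} (hc : ∀ i, 0 ≤ c i)
    {r : ℝ} (hr : 0 < r) (hsum : ∑ i, c i = r) :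
    ∑ i, c i • z i ∈ r • convexHull ℝ S := by
  have hcm := Finset.centerMass_mem_convexHull Finset.univ (fun i _ => hc i)
    (by rw [hsum]; exact hr) (fun i _ => hz i)
  refine Set.mem_smul_set.mpr ⟨Finset.univ.centerMass c z, hcm, ?_⟩
  rw [Finset.centerMass, hsum, smul_inv_smul₀ hr.ne']

lemma key_split {n : ℕ} (S : Finset (Fin n → ℝ)) (hS : S.Nonempty)
    (hSlat : (S : Set (Fin n → ℝ)) ⊆ latticePts n)
    (P : Set (Fin n → ℝ)) (hP : P = convexHull ℝ (S : Set (Fin n → ℝ)))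
    (hPfull : (interior P).Nonempty)
    (k : ℕ)
    (hk : ∀ x ∈ interior ((k : ℝ) • P), x ∉ latticePts n)
    (m : ℕ) (hm2 : 2 ≤ m) (hmk : n + 1 ≤ m + k)
    {x : Fin n → ℝ} (hx : x ∈ ((m : ℝ) • P)) (hxl : x ∈ latticePts n) :
    ∃ u ∈ (S : Set (Fin n → ℝ)), x - u ∈ ((m - 1 : ℕ) : ℝ) • P := by
  classical
  subst hP
  have hm0 : (0 : ℝ) < (m : ℝ) := by exact_mod_cast by omega
  obtain ⟨p₀, hp₀P, hx_eq⟩ := Set.mem_smul_set.mp hx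
  obtain ⟨ι, hfin, z, w, hzS, hzind, hwpos, hwsum, hwz⟩ :=
    eq_pos_convex_span_of_mem_convexHull hp₀P
  haveI hιne : Nonempty ι := by
    rcases isEmpty_or_nonempty ι with h | h
    · exfalso; simp at hwsum
    · exact h
  set lam : ι → ℝ := fun i => (m : ℝ) * w i with hlam
  have hlampos : ∀ i, 0 < lam i := fun i => mul_pos hm0 (hwpos i)
  have hlamsum : ∑ i, lam i = (m : ℝ) := by
    simp only [hlam]
    rw [← Finset.mul_sum, hwsum, mul_one]
  have hlamz : ∑ i, lam i • z i = x := by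
    simp only [hlam, mul_smul, ← Finset.smul_sum]
    rw [hwz, hx_eq]
  by_cases hcase : ∃ i, 1 ≤ lam i
  · obtain ⟨i₀, hi₀⟩ := hcase
    refine ⟨z i₀, hzS (Set.mem_range_self i₀), ?_⟩
    set lam' : ι → ℝ := fun i => lam i - if i = i₀ then 1 else 0 with hlam'
    have hlam'pos : ∀ i, 0 ≤ lam' i := by
      intro i
      simp only [hlam']
      split
      · next h => subst h; linarith
      · linarith [hlampos i]
    have hlam'sum : ∑ i, lam' i = ((m - 1 : ℕ) : ℝ) := by
      simp only [hlam', Finset.sum_sub_distrib, hlamsum, Finset.sum_ite_eq',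
        Finset.mem_univ, if_true]
      push_cast [Nat.cast_sub (by omega : 1 ≤ m)]
      ring
    have hlam'z : ∑ i, lam' i • z i = x - z i₀ := by
      simp only [hlam', sub_smul, ite_smul, one_smul, zero_smul,
        Finset.sum_sub_distrib, hlamz, Finset.sum_ite_eq', Finset.mem_univ, if_true]
    rw [← hlam'z]
    exact sum_mem_smul_convexHull (fun i => hzS (Set.mem_range_self i)) hlam'pos
      (by exact_mod_cast by omega) hlam'sum
  · exfalso
    push_neg at hcase
    -- cardinality facts
    set t : ℕ := Fintype.card ι with ht
    have htm : m < t := by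
      have h1 : (m : ℝ) < (t : ℝ) := by
        rw [← hlamsum]
        calc ∑ i, lam i < ∑ _i : ι, (1 : ℝ) :=
          Finset.sum_lt_sum_of_nonempty Finset.univ_nonempty (fun i _ => hcase i)
        _ = (t : ℝ) := by simp [ht]
      exact_mod_cast h1
    have hfr : Module.finrank ℝ (vectorSpan ℝ (Set.range z)) + 1 = t :=
      hzind.finrank_vectorSpan_add_one
    have htn : t ≤ n + 1 := by
      have := hzind.card_le_finrank_succ
      have hn' : Module.finrank ℝ (vectorSpan ℝ (Set.range z)) ≤ n := by
        have h1 : Module.finrank ℝ (vectorSpan ℝ (Set.range z)) ≤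
            Module.finrank ℝ (Fin n → ℝ) := Submodule.finrank_le _
        simpa [Module.finrank_fin_fun] using h1
      omega
    -- affine span of S is everything
    have hspanS : affineSpan ℝ (S : Set (Fin n → ℝ)) = ⊤ := by
      have h1 := (convex_convexHull ℝ (S : Set (Fin n → ℝ))).interior_nonempty_iff_affineSpan_eq_top.mp hPfull
      rwa [affineSpan_convexHull] at h1
    obtain ⟨V, hVS, hVcard, hVspan⟩ := exists_extend_span S hspanS (n + 1 - t)
      (Set.range z) (Set.range_nonempty z) (by omega)
    obtain ⟨u₀, hu₀⟩ := hS
    have hk1 : (t - m) + V.card ≤ k := by omega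
    have hkpos : 0 < k := by omega
    set p : ℕ := k - ((t - m) + V.card) with hp
    -- the big index type
    have hkR : (0:ℝ) < (k : ℝ) := by exact_mod_cast hkpos
    set z' : (ι ⊕ {v // v ∈ V}) ⊕ Fin p → Fin n → ℝ :=
      Sum.elim (Sum.elim z (fun v => (v : Fin n → ℝ))) (fun _ => u₀) with hz'
    set w' : (ι ⊕ {v // v ∈ V}) ⊕ Fin p → ℝ :=
      Sum.elim (Sum.elim (fun i => (1 - lam i) / k) (fun _ => (k : ℝ)⁻¹))
        (fun _ => (k : ℝ)⁻¹) with hw'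
    have hw'pos : ∀ b, 0 < w' b := by
      rintro ((i | v) | q) <;> simp only [hw', Sum.elim_inl, Sum.elim_inr]
      · exact div_pos (by linarith [hcase i]) hkR
      · exact inv_pos.mpr hkR
      · exact inv_pos.mpr hkR
    have hcast : ((t : ℝ) - m) + V.card + p = (k : ℝ) := by
      have : (t - m) + V.card + p = k := by omega
      push_cast [← this, Nat.cast_sub htm.le]
      ring
    have hw'sum : ∑ b, w' b = 1 := by
      rw [Fintype.sum_sum_type, Fintype.sum_sum_type]
      simp only [hw', Sum.elim_inl, Sum.elim_inr]
      rw [Finset.sum_const, Finset.sum_const, Finset.card_univ, Finset.card_univ,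
        Fintype.card_coe, Fintype.card_fin]
      have h1 : ∑ i : ι, (1 - lam i) / (k : ℝ) = ((t : ℝ) - m) / k := by
        rw [← Finset.sum_div, Finset.sum_sub_distrib, hlamsum]
        simp [ht]
      rw [h1]
      rw [nsmul_eq_mul, nsmul_eq_mul]
      field_simp
      linarith [hcast]
    have hz'span : affineSpan ℝ (Set.range z') = ⊤ := by
      apply top_le_iff.mp
      rw [← hVspan]
      apply affineSpan_mono
      rintro a (ha | ha)
      · obtain ⟨i, rfl⟩ := ha
        exact ⟨Sum.inl (Sum.inl i), rfl⟩
      · exact ⟨Sum.inl (Sum.inr ⟨a, ha⟩), rfl⟩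
    have hcmem := pos_combo_mem_interior z' w' hw'pos hw'sum hz'span
    set c : Fin n → ℝ := ∑ b, w' b • z' b with hc
    have hz'S : Set.range z' ⊆ (S : Set (Fin n → ℝ)) := by
      rintro a ⟨((i | v) | q), rfl⟩
      · exact hzS (Set.mem_range_self i)
      · exact hVS v.2
      · exact hu₀
    have hcint : c ∈ interior (convexHull ℝ (S : Set (Fin n → ℝ))) :=
      interior_mono (convexHull_mono hz'S) hcmem
    have hkc : (k : ℝ) • c ∈ interior ((k : ℝ) • convexHull ℝ (S : Set (Fin n → ℝ))) := by
      rw [interior_smul₀ hkR.ne']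
      exact Set.smul_mem_smul_set hcint
    apply hk _ hkc
    -- lattice point computation
    have hkceq : (k : ℝ) • c = ((∑ i, z i) - x) + ((∑ v : {v // v ∈ V}, (v : Fin n → ℝ))
        + ∑ _q : Fin p, u₀) := by
      rw [hc, Finset.smul_sum]
      simp only [smul_smul]
      rw [Fintype.sum_sum_type, Fintype.sum_sum_type]
      simp only [hw', hz', Sum.elim_inl, Sum.elim_inr]
      have h1 : ∀ i : ι, (k : ℝ) * ((1 - lam i) / k) = 1 - lam i := by
        intro i; field_simp
      have h2 : (k : ℝ) * (k : ℝ)⁻¹ = 1 := by field_simp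
      simp only [h1, h2, one_smul]
      rw [← hlamz]
      simp only [sub_smul, one_smul, Finset.sum_sub_distrib]
      abel
    rw [hkceq]
    apply lat_add
    · apply lat_sub _ hxl
      exact lat_sum _ _ (fun i _ => hSlat (hzS (Set.mem_range_self i)))
    · apply lat_add
      · exact lat_sum _ _ (fun v _ => hSlat (hVS v.2))
      · exact lat_sum _ _ (fun q _ => hSlat hu₀)

/-- Let `P ⊆ ℝ^n` (`n ≥ 1`) be a full-dimensional lattice polytope and `0 ≤ k ≤ n - 1` an
integer such that `kP` contains no lattice point in its interior. Then for all integers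
`ℓ ≥ n - k` and `j ≥ 0` one has `(ℓP ∩ ℤ^n) + (jP ∩ ℤ^n) = (ℓ+j)P ∩ ℤ^n`. -/
theorem lattice_points_add
    (n : ℕ) (hn : 1 ≤ n)
    (S : Finset (Fin n → ℝ)) (hS : S.Nonempty)
    (hSlat : (S : Set (Fin n → ℝ)) ⊆ latticePts n)
    (P : Set (Fin n → ℝ)) (hP : P = convexHull ℝ (S : Set (Fin n → ℝ)))
    (hPfull : (interior P).Nonempty)
    (k : ℕ) (hkn : k ≤ n - 1)
    (hk : ∀ x ∈ interior ((k : ℝ) • P), x ∉ latticePts n)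
    (ℓ : ℕ) (hℓ : n - k ≤ ℓ) (j : ℕ) :
    (((ℓ : ℝ) • P) ∩ latticePts n) + (((j : ℝ) • P) ∩ latticePts n)
      = ((((ℓ + j : ℕ)) : ℝ) • P) ∩ latticePts n := by
  have hconv : Convex ℝ P := hP ▸ convex_convexHull ℝ _
  have hPne : P.Nonempty := hPfull.mono interior_subset
  have hℓ1 : 1 ≤ ℓ := by omega
  apply Set.Subset.antisymm
  · rintro v ⟨a, ⟨haP, hal⟩, b, ⟨hbP, hbl⟩, rfl⟩
    have haP' : a ∈ ((ℓ : ℕ) : ℝ) • P := by exact_mod_cast haP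
    have hbP' : b ∈ ((j : ℕ) : ℝ) • P := by exact_mod_cast hbP
    exact ⟨add_dilates hconv ℓ j haP' hbP', lat_add hal hbl⟩
  · induction j with
    | zero =>
      rintro x ⟨hxP, hxl⟩
      refine Set.mem_add.mpr ⟨x, ⟨?_, hxl⟩, 0, ⟨?_, lat_zero⟩, add_zero x⟩
      · simpa using hxP
      · rw [Nat.cast_zero, Set.zero_smul_set hPne]
        rfl
    | succ j ih =>
      rintro x ⟨hxP, hxl⟩
      obtain ⟨u, huS, hxu⟩ := key_split S hS hSlat P hP hPfull k hk (ℓ + (j + 1))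
        (by omega) (by omega) hxP hxl
      have hmm : ℓ + (j + 1) - 1 = ℓ + j := by omega
      rw [hmm] at hxu
      have hxuL : x - u ∈ latticePts n := lat_sub hxl (hSlat huS)
      obtain ⟨a, ⟨haP, hal⟩, b, ⟨hbP, hbl⟩, hab⟩ := Set.mem_add.mp (ih ⟨hxu, hxuL⟩)
      have huP : u ∈ ((1 : ℕ) : ℝ) • P := by
        rw [Nat.cast_one, one_smul]
        exact hP ▸ subset_convexHull ℝ _ huS
      have hbP' : b ∈ ((j : ℕ) : ℝ) • P := by exact_mod_cast hbP
      have hbu : b + u ∈ (((j + 1 : ℕ)) : ℝ) • P := add_dilates hconv j 1 hbP' huP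
      refine Set.mem_add.mpr ⟨a, ⟨haP, hal⟩, b + u,
        ⟨by exact_mod_cast hbu, lat_add hbl (hSlat huS)⟩, ?_⟩
      rw [← add_assoc, hab, sub_add_cancel]
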